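/- For every circular arc graph G on n vertices with maximum degree Δ < ⌊n/4⌋, the boxicity of G is at most 2. -/

import Mathlib

noncomputable section

/-- The circle of circumference `2π`, as `ℝ / 2πℤ`. -/
abbrev Circle2pi := AddCircle (2 * Real.pi)

/-- The closed arc traversed clockwise (decreasing angle) from the angle `s`
(its left endpoint) through angular length `ℓ`; its right endpoint is `s - ℓ`. -/
def arcSet (s ℓ : ℝ) : Set Circle2pi :=
  (fun t : ℝ => ((s - t : ℝ) : Circle2pi)) '' Set.Icc 0 ℓ

/-- `f` is a circular-arc representation of `G`: each vertex gets a (start angle, length)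
pair describing a proper closed arc, and distinct vertices are adjacent iff
their arcs intersect. -/
def IsCARep {V : Type*} (G : SimpleGraph V) (f : V → ℝ × ℝ) : Prop :=
  (∀ v, 0 < (f v).2 ∧ (f v).2 < 2 * Real.pi) ∧
  ∀ u v, u ≠ v →
    (G.Adj u v ↔ (arcSet (f u).1 (f u).2 ∩ arcSet (f v).1 (f v).2).Nonempty)

/-- `box(G) ≤ k`: `G` is the intersection of `k` interval graphs on `V`. -/
def BoxicityLE {V : Type*} (G : SimpleGraph V) (k : ℕ) : Prop :=
  ∃ I : Fin k → V → Set ℝ,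
    (∀ i v, ∃ a b : ℝ, a ≤ b ∧ I i v = Set.Icc a b) ∧
    ∀ u v : V, u ≠ v → (G.Adj u v ↔ ∀ i, (I i u ∩ I i v).Nonempty)

/-- Reflection of the circle across the line through the center at angle `θ`. -/
def reflMap (θ : ℝ) : Circle2pi → Circle2pi := fun p => ((2 * θ : ℝ) : Circle2pi) - p

/-- The open sector `S_k` (numbered anticlockwise from the positive x-axis):
points of the circle with angle strictly between `πk/α` and `π(k+1)/α`. -/
def sector (α : ℕ) (k : ℤ) : Set Circle2pi :=
  (fun t : ℝ => (t : Circle2pi)) '' Set.Ioo (Real.pi * k / α) (Real.pi * (k + 1) / α)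

/-- Signed coordinate of a point of the circle when orthogonally projected onto the
line through the center at angle `θ` (identified with ℝ). -/
def projCoord (θ : ℝ) : Circle2pi → ℝ :=
  Function.Periodic.lift
    (f := fun x : ℝ => Real.cos (x - θ))
    (fun x => by simp only []; rw [show x + 2 * Real.pi - θ = (x - θ) + 2 * Real.pi by ring,
      Real.cos_add_two_pi])


namespace S13

open Real Set

lemma coe_eq_coe {x y : ℝ} :
    (x : Circle2pi) = (y : Circle2pi) ↔ ∃ k : ℤ, y = x + k * (2 * π) := by
  rw [QuotientAddGroup.eq_iff_sub_mem, AddSubgroup.mem_zmultiples_iff]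
  constructor
  · rintro ⟨k, hk⟩
    exact ⟨-k, by push_cast [zsmul_eq_mul] at hk ⊢; linarith⟩
  · rintro ⟨k, hk⟩
    exact ⟨-k, by push_cast [zsmul_eq_mul]; linarith⟩

/-- Two "arcs" given by real intervals meet on the circle. -/
def Meets (a b c d : ℝ) : Prop :=
  ∃ t₁ ∈ Set.Icc a b, ∃ t₂ ∈ Set.Icc c d, ∃ k : ℤ, t₂ = t₁ + k * (2 * π)

/-- The circle point `x` lies in the arc `[a,b]`. -/
def AMem (a b x : ℝ) : Prop := toIcoMod Real.two_pi_pos a x ≤ b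

lemma arcSet_eq (s ℓ : ℝ) :
    arcSet s ℓ = (fun t : ℝ => (t : Circle2pi)) '' Set.Icc (s - ℓ) s := by
  unfold arcSet
  rw [show (fun t : ℝ => ((s - t : ℝ) : Circle2pi))
      = (fun t : ℝ => (t : Circle2pi)) ∘ (fun t : ℝ => s - t) by rfl,
    Set.image_comp]
  congr 1
  rw [Set.image_const_sub_Icc]
  simp

lemma arcSet_inter_iff {s₁ l₁ s₂ l₂ : ℝ} :
    (arcSet s₁ l₁ ∩ arcSet s₂ l₂).Nonempty ↔ Meets (s₁ - l₁) s₁ (s₂ - l₂) s₂ := by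
  rw [arcSet_eq, arcSet_eq]
  constructor
  · rintro ⟨p, ⟨t₁, ht₁, rfl⟩, ⟨t₂, ht₂, hp⟩⟩
    obtain ⟨k, hk⟩ := coe_eq_coe.mp hp
    exact ⟨t₁, ht₁, t₂, ht₂, ⟨-k, by push_cast; linarith⟩⟩
  · rintro ⟨t₁, ht₁, t₂, ht₂, k, hk⟩
    exact ⟨(t₁ : Circle2pi), ⟨t₁, ht₁, rfl⟩, ⟨t₂, ht₂, (coe_eq_coe.mpr ⟨k, by push_cast; linarith⟩).symm⟩⟩

lemma meets_symm {a b c d : ℝ} (h : Meets a b c d) : Meets c d a b := by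
  obtain ⟨t₁, h1, t₂, h2, k, hk⟩ := h
  exact ⟨t₂, h2, t₁, h1, -k, by push_cast; linarith⟩

lemma toIcoMod_ge {a x : ℝ} : a ≤ toIcoMod Real.two_pi_pos a x :=
  (Set.mem_Ico.1 (toIcoMod_mem_Ico Real.two_pi_pos a x)).1

lemma toIcoMod_lt {a x : ℝ} : toIcoMod Real.two_pi_pos a x < a + 2 * π :=
  (Set.mem_Ico.1 (toIcoMod_mem_Ico Real.two_pi_pos a x)).2

lemma toIcoMod_equiv {a x : ℝ} : ∃ k : ℤ, x = toIcoMod Real.two_pi_pos a x + k * (2 * π) := by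
  obtain ⟨z, hz⟩ := ((toIcoMod_eq_iff Real.two_pi_pos).1 (rfl (a := toIcoMod Real.two_pi_pos a x))).2
  exact ⟨z, by rw [zsmul_eq_mul] at hz; push_cast at hz ⊢; linarith⟩

lemma meets_of_memL {a b c d : ℝ} (hb : a ≤ b) (hd : c ≤ d) (h : AMem a b c) :
    Meets a b c d := by
  obtain ⟨k, hk⟩ := toIcoMod_equiv (a := a) (x := c)
  exact ⟨toIcoMod Real.two_pi_pos a c, ⟨toIcoMod_ge, h⟩, c, ⟨le_refl c, hd⟩, k, hk⟩

/-- Criterion: two proper arcs meet iff one contains the start point of the other. -/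
lemma meets_iff_mem {a b c d : ℝ} (hab : a ≤ b) (hab2 : b < a + 2 * π)
    (hcd : c ≤ d) (hcd2 : d < c + 2 * π) :
    Meets a b c d ↔ AMem a b c ∨ AMem c d a := by
  constructor
  · rintro ⟨t₁, ht₁, t₂, ht₂, k, hk⟩
    rcases le_or_gt (t₁ - a) (t₂ - c) with h | h
    · right
      have he : toIcoMod Real.two_pi_pos c a = t₂ - (t₁ - a) := by
        rw [toIcoMod_eq_iff]
        refine ⟨⟨by linarith [ht₁.1, ht₂.1], by linarith [ht₁.1, ht₂.2]⟩, ⟨-k, ?_⟩⟩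
        push_cast [zsmul_eq_mul]
        linarith
      rw [AMem, he]
      have := ht₁.1
      linarith [ht₂.2]
    · left
      have he : toIcoMod Real.two_pi_pos a c = t₁ - (t₂ - c) := by
        rw [toIcoMod_eq_iff]
        refine ⟨⟨by linarith [ht₂.1, ht₁.1], by linarith [ht₂.1, ht₁.2]⟩, ⟨k, ?_⟩⟩
        push_cast [zsmul_eq_mul]
        linarith
      rw [AMem, he]
      linarith [ht₂.1, ht₁.2]
  · rintro (h | h)
    · exact meets_of_memL hab hcd h
    · exact meets_symm (meets_of_memL hcd hab h)

end S13

namespace S13B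
open Real Set S13

/-- Rank of `x` in finite set `S`. -/
def rnk (S : Finset ℝ) (x : ℝ) : ℕ := (S.filter (fun y => y < x)).card

lemma rnk_le_rnk (S : Finset ℝ) {x y : ℝ} (h : x ≤ y) : rnk S x ≤ rnk S y := by
  apply Finset.card_le_card
  intro z hz
  rw [Finset.mem_filter] at hz ⊢
  exact ⟨hz.1, lt_of_lt_of_le hz.2 h⟩

lemma rnk_lt_rnk {S : Finset ℝ} {x y : ℝ} (hx : x ∈ S) (h : x < y) : rnk S x < rnk S y := by
  apply Finset.card_lt_card
  constructor
  · intro z hz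
    rw [Finset.mem_filter] at hz ⊢
    exact ⟨hz.1, lt_trans hz.2 h⟩
  · intro hsub
    have : x ∈ Finset.filter (fun y_1 => y_1 < x) S := hsub (by rw [Finset.mem_filter]; exact ⟨hx, h⟩)
    rw [Finset.mem_filter] at this
    exact lt_irrefl x this.2

lemma rnk_lt_iff {S : Finset ℝ} {x y : ℝ} (hx : x ∈ S) (hy : y ∈ S) :
    x < y ↔ rnk S x < rnk S y := by
  constructor
  · exact fun h => rnk_lt_rnk hx h
  · intro h
    by_contra hc
    push_neg at hc
    exact absurd (rnk_le_rnk S hc) (by omega)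

lemma rnk_le_iff {S : Finset ℝ} {x y : ℝ} (hx : x ∈ S) (hy : y ∈ S) :
    x ≤ y ↔ rnk S x ≤ rnk S y := by
  constructor
  · exact fun h => rnk_le_rnk S h
  · intro h
    by_contra hc
    push_neg at hc
    exact absurd (rnk_lt_rnk hy hc) (by omega)

lemma rnk_lt_card {S : Finset ℝ} {x : ℝ} (hx : x ∈ S) : rnk S x < S.card := by
  apply Finset.card_lt_card
  constructor
  · exact Finset.filter_subset _ _
  · intro hsub
    have : x ∈ Finset.filter (fun y => y < x) S := hsub hx
    rw [Finset.mem_filter] at this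
    exact lt_irrefl x this.2

lemma filter_le_eq {S : Finset ℝ} {B : ℝ} (hB : B ∈ S) :
    S.filter (fun x => x ≤ B) = insert B (S.filter (fun x => x < B)) := by
  ext z
  simp only [Finset.mem_filter, Finset.mem_insert]
  constructor
  · rintro ⟨hz, hle⟩
    rcases eq_or_lt_of_le hle with h | h
    · exact Or.inl h
    · exact Or.inr ⟨hz, h⟩
  · rintro (rfl | ⟨hz, hlt⟩)
    · exact ⟨hB, le_refl _⟩
    · exact ⟨hz, le_of_lt hlt⟩

lemma card_filter_le {S : Finset ℝ} {B : ℝ} (hB : B ∈ S) :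
    (S.filter (fun x => x ≤ B)).card = rnk S B + 1 := by
  rw [filter_le_eq hB, Finset.card_insert_of_notMem (by simp), rnk]

lemma count1 {S : Finset ℝ} {A B : ℝ} (hB : B ∈ S) (hAB : A ≤ B) :
    (S.filter (fun x => A ≤ x ∧ x ≤ B)).card + rnk S A = rnk S B + 1 := by
  have h2 : S.filter (fun x => A ≤ x ∧ x ≤ B)
      = (S.filter (fun x => x ≤ B)) \ (S.filter (fun x => x < A)) := by
    ext z
    simp only [Finset.mem_filter, Finset.mem_sdiff, not_and, not_lt]
    constructor
    · rintro ⟨hz, h1, h2⟩; exact ⟨⟨hz, h2⟩, fun _ => h1⟩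
    · rintro ⟨⟨hz, h2⟩, h1⟩; exact ⟨hz, h1 hz, h2⟩
  have h3 : S.filter (fun x => x < A) ⊆ S.filter (fun x => x ≤ B) := by
    intro z hz
    rw [Finset.mem_filter] at hz ⊢
    exact ⟨hz.1, le_trans (le_of_lt hz.2) hAB⟩
  have h4 := Finset.card_le_card h3
  rw [h2, Finset.card_sdiff_of_subset h3, card_filter_le hB]
  rw [card_filter_le hB] at h4
  unfold rnk at *
  omega

lemma count2 {S : Finset ℝ} {A B : ℝ} (hA : A ∈ S) (hB : B ∈ S) (h : B < A) :
    (S.filter (fun x => A ≤ x ∨ x ≤ B)).card + rnk S A = S.card + rnk S B + 1 := by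
  have h3 : S.filter (fun x => x ≤ B) ⊆ S.filter (fun x => x < A) := by
    intro z hz
    rw [Finset.mem_filter] at hz ⊢
    exact ⟨hz.1, lt_of_le_of_lt hz.2 h⟩
  have h4 : S.filter (fun x => A ≤ x ∨ x ≤ B)
      = S \ ((S.filter (fun x => x < A)) \ (S.filter (fun x => x ≤ B))) := by
    ext z
    simp only [Finset.mem_filter, Finset.mem_sdiff]
    constructor
    · rintro ⟨hz, hor⟩
      refine ⟨hz, ?_⟩
      rintro ⟨⟨_, hlt⟩, hnb⟩
      rcases hor with h1 | h1
      · linarith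
      · exact hnb ⟨hz, h1⟩
    · rintro ⟨hz, hno⟩
      refine ⟨hz, ?_⟩
      by_contra hc
      push_neg at hc
      exact hno ⟨⟨hz, hc.1⟩, fun hzb => absurd hzb.2 (not_le.mpr hc.2)⟩
  have h5 : ((S.filter (fun x => x < A)) \ (S.filter (fun x => x ≤ B))) ⊆ S :=
    subset_trans (Finset.sdiff_subset) (Finset.filter_subset _ _)
  have h6 := Finset.card_le_card h3
  have h7 := Finset.card_le_card h5
  have h8 : (S.filter (fun x => x < A)).card ≤ S.card :=
    Finset.card_le_card (Finset.filter_subset _ _)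
  rw [h4, Finset.card_sdiff_of_subset h5, Finset.card_sdiff_of_subset h3, card_filter_le hB]
  rw [card_filter_le hB] at h6
  rw [Finset.card_sdiff_of_subset h3, card_filter_le hB] at h7
  unfold rnk at *
  omega

lemma mem_formula {a b x : ℝ} (ha0 : 0 ≤ a) (ha2 : a < 2*π) (hx0 : 0 ≤ x) (hx2 : x < 2*π) :
    AMem a b x ↔ ((a ≤ x ∧ x ≤ b) ∨ x + 2*π ≤ b) := by
  rcases le_or_gt a x with h | h
  · have he : toIcoMod Real.two_pi_pos a x = x :=
      (toIcoMod_eq_self Real.two_pi_pos).2 ⟨h, by linarith⟩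
    rw [AMem, he]
    constructor
    · intro hxb; exact Or.inl ⟨h, hxb⟩
    · rintro (⟨_, h2⟩ | h2)
      · exact h2
      · linarith
  · have he : toIcoMod Real.two_pi_pos a x = x + 2*π := by
      rw [toIcoMod_eq_iff]
      exact ⟨⟨by linarith, by linarith⟩, ⟨-1, by push_cast [zsmul_eq_mul]; ring⟩⟩
    rw [AMem, he]
    constructor
    · intro h2; exact Or.inr h2
    · rintro (⟨h1, _⟩ | h2)
      · linarith
      · exact h2

end S13B

namespace S13C
open Real Set S13 S13B

lemma phase2 {V : Type*} [Fintype V] [DecidableEq V] (G : SimpleGraph V) (a b : V → ℝ)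
    (N : V → Finset V) (hN : ∀ v w, w ∈ N v ↔ G.Adj v w)
    (hNc : ∀ v, 4 * (N v).card + 4 ≤ Fintype.card V)
    (ha : ∀ v, 0 ≤ a v ∧ a v < 2*π)
    (hlen : ∀ v, a v < b v ∧ b v < a v + 2*π)
    (hadj : ∀ u v, u ≠ v → (G.Adj u v ↔ Meets (a u) (b u) (a v) (b v)))
    (hdist : Function.Injective (fun t : V × Bool =>
      if t.2 then toIcoMod Real.two_pi_pos 0 (b t.1) else a t.1)) :
    ∃ c d : V → ℝ, (∀ v, 0 < d v - c v ∧ d v - c v < π/2) ∧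
      ∀ u v, u ≠ v → (G.Adj u v ↔ Meets (c u) (d u) (c v) (d v)) := by
  classical
  rcases isEmpty_or_nonempty V with hV | hV
  · exact ⟨fun _ => 0, fun _ => 0, fun v => (IsEmpty.false v).elim,
      fun u v _ => (IsEmpty.false u).elim⟩
  set n := Fintype.card V with hn
  have hn4 : 4 ≤ n := by
    obtain ⟨v0⟩ := hV
    have := hNc v0
    omega
  have hnR : (0:ℝ) < (n:ℝ) := by exact_mod_cast (by omega : 0 < n)
  have hπn : 0 < π / n := div_pos Real.pi_pos hnR
  set val : V × Bool → ℝ :=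
    (fun t : V × Bool => if t.2 then toIcoMod Real.two_pi_pos 0 (b t.1) else a t.1) with hval
  set S : Finset ℝ := Finset.image val Finset.univ with hSdef
  set vb : V → ℝ := fun v => toIcoMod Real.two_pi_pos 0 (b v) with hvbdef
  set pos : ℝ → ℝ := fun x => (rnk S x : ℝ) * (π / n) with hposdef
  set c : V → ℝ := fun v => pos (a v) with hcdef
  set d : V → ℝ := fun v => if b v < 2*π then pos (vb v) else pos (vb v) + 2*π with hddef
  have haS : ∀ v, a v ∈ S := fun v => Finset.mem_image.2 ⟨(v, false), Finset.mem_univ _, rfl⟩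
  have hvbS : ∀ v, vb v ∈ S := fun v => Finset.mem_image.2 ⟨(v, true), Finset.mem_univ _, rfl⟩
  have hSrange : ∀ x ∈ S, 0 ≤ x ∧ x < 2*π := by
    intro x hx
    obtain ⟨⟨w, bo⟩, _, rfl⟩ := Finset.mem_image.1 hx
    cases bo
    · simpa [hval] using ha w
    · have := toIcoMod_mem_Ico' Real.two_pi_pos (b w)
      rw [Set.mem_Ico] at this
      simpa [hval] using this
  have hScard : S.card = 2 * n := by
    rw [hSdef, Finset.card_image_of_injective _ hdist, Finset.card_univ, Fintype.card_prod,
      Fintype.card_bool]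
    ring
  have hvbc : ∀ v, (b v < 2*π ∧ vb v = b v) ∨ (2*π ≤ b v ∧ vb v = b v - 2*π) := by
    intro v
    rcases lt_or_ge (b v) (2*π) with h | h
    · refine Or.inl ⟨h, (toIcoMod_eq_self Real.two_pi_pos).2 ?_⟩
      constructor
      · linarith [(ha v).1, (hlen v).1]
      · linarith
    · refine Or.inr ⟨h, ?_⟩
      rw [toIcoMod_eq_iff]
      refine ⟨⟨by linarith, by linarith [(ha v).2, (hlen v).2]⟩, ⟨1, ?_⟩⟩
      push_cast [zsmul_eq_mul]
      ring
  have havb : ∀ v, a v ≠ vb v := by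
    intro v h
    have : val (v, false) = val (v, true) := by simp [hval, hvbdef] at h ⊢; exact h
    simpa using hdist this
  have hpos0 : ∀ x, 0 ≤ pos x := by
    intro x
    exact mul_nonneg (Nat.cast_nonneg _) (le_of_lt hπn)
  have hposlt : ∀ x ∈ S, pos x < 2*π := by
    intro x hx
    have h1 : rnk S x + 1 ≤ 2 * n := by
      have := rnk_lt_card hx
      omega
    have h2 : (rnk S x : ℝ) ≤ 2*(n:ℝ) - 1 := by
      have : (rnk S x + 1 : ℝ) ≤ 2*(n:ℝ) := by exact_mod_cast h1
      linarith
    have h3 : pos x ≤ (2*(n:ℝ) - 1) * (π / n) :=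
      mul_le_mul_of_nonneg_right h2 (le_of_lt hπn)
    have h4 : (2*(n:ℝ) - 1) * (π / n) < 2*π := by
      rw [div_eq_mul_inv]
      have : (2*(n:ℝ) - 1) * (π * (n:ℝ)⁻¹) = 2*π - π * (n:ℝ)⁻¹ := by
        field_simp
      rw [this]
      have : 0 < π * (n:ℝ)⁻¹ := by positivity
      linarith
    linarith
  have hposle : ∀ x ∈ S, ∀ y ∈ S, (x ≤ y ↔ pos x ≤ pos y) := by
    intro x hx y hy
    rw [rnk_le_iff hx hy, hposdef]
    simp only []
    rw [mul_le_mul_iff_left₀ hπn, Nat.cast_le]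
  have hposlt' : ∀ x ∈ S, ∀ y ∈ S, (x < y ↔ pos x < pos y) := by
    intro x hx y hy
    rw [rnk_lt_iff hx hy, hposdef]
    simp only []
    rw [mul_lt_mul_iff_left₀ hπn, Nat.cast_lt]
  set mc : V → ℕ := fun v => (S.filter (fun x => AMem (a v) (b v) x)).card with hmcdef
  -- lower bound on mc
  have hmclb : ∀ v, 2 ≤ mc v := by
    intro v
    have hsub : ({a v, vb v} : Finset ℝ) ⊆ S.filter (fun x => AMem (a v) (b v) x) := by
      intro x hx
      rw [Finset.mem_insert, Finset.mem_singleton] at hx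
      rw [Finset.mem_filter]
      rcases hx with rfl | rfl
      · refine ⟨haS v, ?_⟩
        show toIcoMod Real.two_pi_pos (a v) (a v) ≤ b v
        rw [toIcoMod_apply_left]
        exact le_of_lt (hlen v).1
      · refine ⟨hvbS v, ?_⟩
        show toIcoMod Real.two_pi_pos (a v) (vb v) ≤ b v
        have he : toIcoMod Real.two_pi_pos (a v) (vb v) = b v := by
          rw [toIcoMod_eq_iff]
          refine ⟨⟨le_of_lt (hlen v).1, (hlen v).2⟩, ?_⟩
          rcases hvbc v with ⟨_, hvbe⟩ | ⟨_, hvbe⟩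
          · exact ⟨0, by rw [hvbe]; simp⟩
          · exact ⟨-1, by rw [hvbe]; push_cast [zsmul_eq_mul]; ring⟩
        rw [he]
    have := Finset.card_le_card hsub
    rwa [Finset.card_pair (havb v)] at this
  -- upper bound on mc
  have hmcub : ∀ v, mc v ≤ 2 + 2 * (N v).card := by
    intro v
    have hsub : S.filter (fun x => AMem (a v) (b v) x) ⊆
        insert (a v) (insert (vb v) ((N v).biUnion (fun w => {a w, vb w}))) := by
      intro x hx
      rw [Finset.mem_filter] at hx
      obtain ⟨hx1, hx2⟩ := hx
      obtain ⟨⟨w, bo⟩, _, hvw⟩ := Finset.mem_image.1 hx1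
      by_cases hwv : w = v
      · subst hwv
        cases bo
        · simp only [hval] at hvw
          simp [← hvw]
        · simp [hval] at hvw
          rw [Finset.mem_insert, Finset.mem_insert]
          right; left
          simpa [hvbdef] using hvw.symm
      · have hmeets : Meets (a v) (b v) (a w) (b w) := by
          obtain ⟨k₂, hk₂⟩ := toIcoMod_equiv (a := a v) (x := x)
          cases bo
          · -- x = a w
            simp [hval] at hvw
            refine ⟨toIcoMod Real.two_pi_pos (a v) x, ⟨toIcoMod_ge, hx2⟩, a w,
              ⟨le_refl _, le_of_lt (hlen w).1⟩, k₂, ?_⟩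
            rw [hvw]
            exact hk₂
          · -- x = vb w
            simp [hval] at hvw
            obtain ⟨k₁, hk₁⟩ := toIcoMod_equiv (a := (0:ℝ)) (x := b w)
            rw [hvw] at hk₁
            refine ⟨toIcoMod Real.two_pi_pos (a v) x, ⟨toIcoMod_ge, hx2⟩, b w,
              ⟨le_of_lt (hlen w).1, le_refl _⟩, k₂ + k₁, ?_⟩
            push_cast
            linarith
        have hAdj : G.Adj v w := (hadj v w (fun h => hwv h.symm)).2 hmeets
        have hwN : w ∈ N v := (hN v w).2 hAdj
        rw [Finset.mem_insert, Finset.mem_insert]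
        right; right
        rw [Finset.mem_biUnion]
        refine ⟨w, hwN, ?_⟩
        cases bo
        · simp only [hval] at hvw
          simp [← hvw]
        · simp [hval] at hvw
          rw [Finset.mem_insert, Finset.mem_singleton]
          right
          simpa [hvbdef] using hvw.symm
    calc mc v ≤ (insert (a v) (insert (vb v) ((N v).biUnion (fun w => {a w, vb w})))).card :=
          Finset.card_le_card hsub
      _ ≤ (insert (vb v) ((N v).biUnion (fun w => {a w, vb w}))).card + 1 :=
          Finset.card_insert_le _ _
      _ ≤ ((N v).biUnion (fun w => {a w, vb w})).card + 1 + 1 := by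
          have := Finset.card_insert_le (vb v) ((N v).biUnion (fun w => {a w, vb w}))
          omega
      _ ≤ 2 + 2 * (N v).card := by
          have h1 := Finset.card_biUnion_le (s := N v) (t := fun w => ({a w, vb w} : Finset ℝ))
          have h2 : ∑ w ∈ N v, ({a w, vb w} : Finset ℝ).card ≤ ∑ _w ∈ N v, 2 := by
            apply Finset.sum_le_sum
            intro i _
            exact le_trans (Finset.card_insert_le _ _) (by simp)
          rw [Finset.sum_const, smul_eq_mul] at h2
          omega
  have hmcn : ∀ v, 2 * mc v ≤ n := by
    intro v
    have := hmcub v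
    have := hNc v
    omega
  -- the key per-vertex facts
  have key : ∀ v, (d v - c v = ((mc v : ℝ) - 1) * (π/n)) ∧
      (∀ x ∈ S, (AMem (c v) (d v) (pos x) ↔ AMem (a v) (b v) x)) := by
    intro v
    have hav0 := (ha v).1
    have hav2 := (ha v).2
    have hcS := haS v
    have hvS := hvbS v
    have hcv : c v = pos (a v) := rfl
    rcases hvbc v with ⟨hb2, hvbe⟩ | ⟨hb2, hvbe⟩
    · -- unwrapped
      have havb' : a v < vb v := by rw [hvbe]; exact (hlen v).1
      have hdv : d v = pos (vb v) := by rw [hddef]; simp [hb2]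
      have hOld : ∀ x ∈ S, (AMem (a v) (b v) x ↔ (a v ≤ x ∧ x ≤ vb v)) := by
        intro x hx
        rw [mem_formula hav0 hav2 (hSrange x hx).1 (hSrange x hx).2, hvbe]
        constructor
        · rintro (⟨h1, h2⟩ | h2)
          · exact ⟨h1, h2⟩
          · exfalso; linarith [(hSrange x hx).1]
        · exact fun h => Or.inl h
      have hfilter : S.filter (fun x => AMem (a v) (b v) x)
          = S.filter (fun x => a v ≤ x ∧ x ≤ vb v) := Finset.filter_congr hOld
      have hcount := count1 hvS (le_of_lt havb')
      have hcast : (mc v : ℝ) + (rnk S (a v) : ℝ) = (rnk S (vb v) : ℝ) + 1 := by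
        have : mc v + rnk S (a v) = rnk S (vb v) + 1 := by
          rw [hmcdef]; simp only []; rw [hfilter]; exact hcount
        exact_mod_cast this
      have hLen : d v - c v = ((mc v : ℝ) - 1) * (π/n) := by
        rw [hdv, hcv]; simp only [hposdef]
        linear_combination (-(π/(n:ℝ))) * hcast
      refine ⟨hLen, ?_⟩
      intro x hx
      rw [hOld x hx]
      have hnb : AMem (c v) (d v) (pos x) ↔ ((c v ≤ pos x ∧ pos x ≤ d v) ∨ pos x + 2*π ≤ d v) :=
        mem_formula (hpos0 _) (hposlt _ hcS) (hpos0 _) (hposlt _ hx)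
      rw [hnb, hdv, hcv]
      constructor
      · rintro (⟨h1, h2⟩ | h2)
        · exact ⟨(hposle _ hcS _ hx).2 h1, (hposle _ hx _ hvS).2 h2⟩
        · exfalso; linarith [hposlt _ hvS, hpos0 x]
      · rintro ⟨h1, h2⟩
        exact Or.inl ⟨(hposle _ hcS _ hx).1 h1, (hposle _ hx _ hvS).1 h2⟩
    · -- wrapped
      have hvb_lt : vb v < a v := by rw [hvbe]; linarith [(hlen v).2]
      have hdv : d v = pos (vb v) + 2*π := by rw [hddef]; simp [not_lt.2 hb2]
      have hOld : ∀ x ∈ S, (AMem (a v) (b v) x ↔ (a v ≤ x ∨ x ≤ vb v)) := by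
        intro x hx
        rw [mem_formula hav0 hav2 (hSrange x hx).1 (hSrange x hx).2]
        constructor
        · rintro (⟨h1, _⟩ | h2)
          · exact Or.inl h1
          · right; rw [hvbe]; linarith
        · rintro (h1 | h2)
          · exact Or.inl ⟨h1, by linarith [(hSrange x hx).2]⟩
          · rw [hvbe] at h2; right; linarith
      have hfilter : S.filter (fun x => AMem (a v) (b v) x)
          = S.filter (fun x => a v ≤ x ∨ x ≤ vb v) := Finset.filter_congr hOld
      have hcount := count2 hcS hvS hvb_lt
      have hcast : (mc v : ℝ) + (rnk S (a v) : ℝ) = 2*(n:ℝ) + (rnk S (vb v) : ℝ) + 1 := by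
        have h0 : mc v + rnk S (a v) = 2*n + rnk S (vb v) + 1 := by
          rw [hmcdef]; simp only []; rw [hfilter, ← hScard]; exact hcount
        exact_mod_cast h0
      have hLen : d v - c v = ((mc v : ℝ) - 1) * (π/n) := by
        rw [hdv, hcv]; simp only [hposdef]
        have h2pi : 2*π = 2*(n:ℝ) * (π/n) := by field_simp
        linear_combination (-(π/(n:ℝ))) * hcast + h2pi
      refine ⟨hLen, ?_⟩
      intro x hx
      rw [hOld x hx]
      have hnb : AMem (c v) (d v) (pos x) ↔ ((c v ≤ pos x ∧ pos x ≤ d v) ∨ pos x + 2*π ≤ d v) :=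
        mem_formula (hpos0 _) (hposlt _ hcS) (hpos0 _) (hposlt _ hx)
      rw [hnb, hdv, hcv]
      constructor
      · rintro (⟨h1, _⟩ | h2)
        · exact Or.inl ((hposle _ hcS _ hx).2 h1)
        · exact Or.inr ((hposle _ hx _ hvS).2 (by linarith))
      · rintro (h1 | h2)
        · exact Or.inl ⟨(hposle _ hcS _ hx).1 h1, by linarith [hposlt _ hx, hpos0 (vb v)]⟩
        · exact Or.inr (by linarith [(hposle _ hx _ hvS).1 h2])
  have hbnds : ∀ v, 0 < d v - c v ∧ d v - c v < π/2 := by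
    intro v
    have hL := (key v).1
    have h1 : (1:ℝ) ≤ (mc v : ℝ) - 1 := by
      have h2 : (2:ℝ) ≤ (mc v : ℝ) := by exact_mod_cast hmclb v
      linarith
    constructor
    · rw [hL]
      nlinarith [hπn]
    · rw [hL]
      have h2R : 2*((mc v):ℝ) ≤ (n:ℝ) := by exact_mod_cast hmcn v
      have h3 : π * (((mc v:ℝ) - 1) * 2) < π * n := by
        apply mul_lt_mul_of_pos_left _ Real.pi_pos
        linarith
      rw [← mul_div_assoc, div_lt_iff₀ hnR]
      linarith
  refine ⟨c, d, hbnds, ?_⟩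
  intro u v huv
  have hbu := hbnds u
  have hbv := hbnds v
  rw [hadj u v huv,
    meets_iff_mem (le_of_lt (hlen u).1) (hlen u).2 (le_of_lt (hlen v).1) (hlen v).2,
    meets_iff_mem (a := c u) (b := d u) (c := c v) (d := d v)
      (by linarith [hbu.1]) (by linarith [hbu.2, Real.pi_pos])
      (by linarith [hbv.1]) (by linarith [hbv.2, Real.pi_pos])]
  exact or_congr ((key u).2 (a v) (haS v)).symm ((key v).2 (a u) (haS u)).symm

end S13C

namespace S13D
open Real Set S13

lemma phase3 {V : Type*} (G : SimpleGraph V) (c d : V → ℝ)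
    (hb : ∀ v, 0 < d v - c v ∧ d v - c v < π/2)
    (hadj : ∀ u v, u ≠ v → (G.Adj u v ↔ Meets (c u) (d u) (c v) (d v))) :
    BoxicityLE G 2 := by
  refine ⟨fun i v => if i = (0 : Fin 2) then Real.cos '' Set.Icc (c v) (d v)
    else Real.sin '' Set.Icc (c v) (d v), ?_, ?_⟩
  · intro i v
    dsimp only
    have hcd : c v ≤ d v := by linarith [(hb v).1]
    by_cases hi : i = (0 : Fin 2)
    · rw [if_pos hi]
      have heq := ContinuousOn.image_Icc hcd (Real.continuous_cos.continuousOn)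
      refine ⟨_, _, ?_, heq⟩
      have hne : (Real.cos '' Set.Icc (c v) (d v)).Nonempty :=
        (Set.nonempty_Icc.2 hcd).image _
      rw [heq] at hne
      exact Set.nonempty_Icc.1 hne
    · rw [if_neg hi]
      have heq := ContinuousOn.image_Icc hcd (Real.continuous_sin.continuousOn)
      refine ⟨_, _, ?_, heq⟩
      have hne : (Real.sin '' Set.Icc (c v) (d v)).Nonempty :=
        (Set.nonempty_Icc.2 hcd).image _
      rw [heq] at hne
      exact Set.nonempty_Icc.1 hne
  · intro u v huv
    rw [hadj u v huv]
    constructor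
    · rintro ⟨t₁, ht₁, t₂, ht₂, k, hk⟩ i
      dsimp only
      by_cases hi : i = (0 : Fin 2)
      · rw [if_pos hi, if_pos hi]
        refine ⟨Real.cos t₁, ⟨t₁, ht₁, rfl⟩, ⟨t₂, ht₂, ?_⟩⟩
        rw [hk, Real.cos_add_int_mul_two_pi]
      · rw [if_neg hi, if_neg hi]
        refine ⟨Real.sin t₁, ⟨t₁, ht₁, rfl⟩, ⟨t₂, ht₂, ?_⟩⟩
        rw [hk, Real.sin_add_int_mul_two_pi]
    · intro h
      have h0 := h 0
      have h1 := h 1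
      dsimp only at h0 h1
      rw [if_pos rfl, if_pos rfl] at h0
      rw [if_neg (by decide), if_neg (by decide)] at h1
      obtain ⟨r, ⟨t₁, ht₁, he1⟩, ⟨t₁', ht₁', he2⟩⟩ := h0
      obtain ⟨r', ⟨t₂, ht₂, hf1⟩, ⟨t₂', ht₂', hf2⟩⟩ := h1
      have hcos : Real.cos t₁ = Real.cos t₁' := by rw [he1, he2]
      have hsin : Real.sin t₂ = Real.sin t₂' := by rw [hf1, hf2]
      rw [Real.cos_eq_cos_iff] at hcos
      rw [Real.sin_eq_sin_iff] at hsin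
      obtain ⟨k, hk⟩ := hcos
      obtain ⟨m, hm⟩ := hsin
      rcases hk with hk | hk
      · exact ⟨t₁, ht₁, t₁', ht₁', k, by push_cast at hk ⊢; linarith⟩
      · rcases hm with hm | hm
        · exact ⟨t₂, ht₂, t₂', ht₂', m, by push_cast at hm ⊢; linarith⟩
        · exfalso
          rw [Set.mem_Icc] at ht₁ ht₂ ht₁' ht₂'
          have hu1 := (hb u).2
          have hv1 := (hb v).2
          have hj : ((2*(k - m) - 1 : ℤ) : ℝ) * π = (t₁' - t₂') + (t₁ - t₂) := by
            push_cast at hk hm ⊢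
            linarith
          have habs : |(t₁' - t₂') + (t₁ - t₂)| < π := by
            rw [abs_lt]
            constructor <;> nlinarith [ht₁.1, ht₁.2, ht₂.1, ht₂.2, ht₁'.1, ht₁'.2,
              ht₂'.1, ht₂'.2, (hb u).1, (hb v).1]
          have hjj : (1:ℝ) ≤ |((2*(k - m) - 1 : ℤ) : ℝ)| := by
            have : (1:ℤ) ≤ |2*(k - m) - 1| := by
              rcases abs_cases (2*(k - m) - 1 : ℤ) with ⟨h, _⟩ | ⟨h, _⟩ <;> omega
            exact_mod_cast this
          rw [← hj, abs_mul, abs_of_pos Real.pi_pos] at habs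
          nlinarith [Real.pi_pos]

end S13D

namespace S13E
open Real Set S13

lemma meets_mono {a b c d a' b' c' d' : ℝ} (h : Meets a b c d)
    (h1 : a' ≤ a) (h2 : b ≤ b') (h3 : c' ≤ c) (h4 : d ≤ d') : Meets a' b' c' d' := by
  obtain ⟨t₁, ht₁, t₂, ht₂, k, hk⟩ := h
  exact ⟨t₁, ⟨le_trans h1 ht₁.1, le_trans ht₁.2 h2⟩,
    t₂, ⟨le_trans h3 ht₂.1, le_trans ht₂.2 h4⟩, k, hk⟩

lemma meets_shiftL {a b c d : ℝ} (j : ℤ) (h : Meets a b c d) :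
    Meets (a + j * (2*π)) (b + j * (2*π)) c d := by
  obtain ⟨t₁, ht₁, t₂, ht₂, k, hk⟩ := h
  refine ⟨t₁ + j * (2*π), ⟨by linarith [ht₁.1], by linarith [ht₁.2]⟩, t₂, ht₂, k - j, ?_⟩
  push_cast
  linarith

lemma meets_shift_iff {a b c d : ℝ} (j j' : ℤ) :
    Meets (a + j * (2*π)) (b + j * (2*π)) (c + j' * (2*π)) (d + j' * (2*π)) ↔ Meets a b c d := by
  constructor
  · intro h
    have h1 := meets_shiftL (-j) h
    have h2 := meets_symm (meets_shiftL (-j') (meets_symm h1))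
    push_cast at h2
    convert h2 using 2 <;> ring
  · intro h
    exact meets_shiftL j (meets_symm (meets_shiftL j' (meets_symm h)))

/-- If the (closed) gap conditions hold, the slightly enlarged arcs still avoid
each other's start point. -/
lemma perturb_nomem {a0u su a0v εu εv εb : ℝ}
    (hlu : a0u < su) (hεv : 0 < εv) (hεu : 0 < εu) (hεb : 0 < εb)
    (h1 : εv + εb < toIcoMod Real.two_pi_pos a0u a0v - su)
    (h2 : εu + εv < a0u + 2*π - toIcoMod Real.two_pi_pos a0u a0v) :
    ¬ AMem (a0u - εu) (su + εb) (a0v - εv) := by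
  intro hmem
  have hmem' : toIcoMod Real.two_pi_pos (a0u - εu) (a0v - εv) ≤ su + εb := hmem
  have hTlb : a0u ≤ toIcoMod Real.two_pi_pos a0u a0v := toIcoMod_ge
  have hE : toIcoMod Real.two_pi_pos (a0u - εu) (a0v - εv)
      = toIcoMod Real.two_pi_pos a0u a0v - εv := by
    rw [toIcoMod_eq_iff]
    refine ⟨?_, ?_⟩
    · rw [Set.mem_Ico]
      constructor
      · linarith
      · linarith
    · obtain ⟨z, hz⟩ := toIcoMod_equiv (a := a0u) (x := a0v)
      exact ⟨z, by rw [zsmul_eq_mul]; linarith⟩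
  rw [hE] at hmem'
  linarith

lemma phase1 {V : Type*} [Fintype V] [DecidableEq V] (G : SimpleGraph V)
    [DecidableRel G.Adj] (s ℓ : V → ℝ)
    (hlen : ∀ v, 0 < ℓ v ∧ ℓ v < 2*π)
    (hadj : ∀ u v, u ≠ v → (G.Adj u v ↔ Meets (s u - ℓ u) (s u) (s v - ℓ v) (s v))) :
    ∃ a b : V → ℝ,
      (∀ v, 0 ≤ a v ∧ a v < 2*π) ∧ (∀ v, a v < b v ∧ b v < a v + 2*π) ∧
      (∀ u v, u ≠ v → (G.Adj u v ↔ Meets (a u) (b u) (a v) (b v))) ∧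
      Function.Injective (fun t : V × Bool =>
        if t.2 then toIcoMod Real.two_pi_pos 0 (b t.1) else a t.1) := by
  classical
  set m : V × Bool → ℕ := fun t => ((Fintype.equivFin (V × Bool)) t : ℕ) + 1 with hm
  set M : ℕ := Fintype.card (V × Bool) with hM
  have hminj : Function.Injective m := by
    intro t t' h
    have : ((Fintype.equivFin (V × Bool)) t : ℕ) = ((Fintype.equivFin (V × Bool)) t' : ℕ) := by
      simpa [hm] using h
    exact (Fintype.equivFin (V × Bool)).injective (Fin.ext this)
  have hm1 : ∀ t, 1 ≤ m t := fun t => by simp [hm]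
  have hmM : ∀ t, m t ≤ M := by
    intro t
    have := ((Fintype.equivFin (V × Bool)) t).2
    simp only [hm, hM]
    omega
  set coefR : V × Bool → ℝ := fun t => if t.2 then (m t : ℝ) else -(m t : ℝ) with hcoef
  set base : V × Bool → ℝ := fun t => if t.2 then s t.1 else s t.1 - ℓ t.1 with hbase
  have hcoefne : ∀ t t' : V × Bool, t ≠ t' → coefR t - coefR t' ≠ 0 := by
    intro t t' hne hc
    have hdiff : coefR t = coefR t' := by linarith
    rcases t with ⟨x, bx⟩; rcases t' with ⟨y, by'⟩
    have hcf : ∀ z : V, coefR (z, false) = -((m (z, false) : ℕ) : ℝ) := fun z => rfl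
    have hct : ∀ z : V, coefR (z, true) = ((m (z, true) : ℕ) : ℝ) := fun z => rfl
    cases bx <;> cases by'
    · rw [hcf, hcf] at hdiff
      have h2 : (m (x, false) : ℝ) = m (y, false) := by linarith
      exact hne (hminj (by exact_mod_cast h2))
    · rw [hcf, hct] at hdiff
      have c1 : (1:ℝ) ≤ (m (x, false) : ℝ) := by exact_mod_cast hm1 (x, false)
      have c2 : (1:ℝ) ≤ (m (y, true) : ℝ) := by exact_mod_cast hm1 (y, true)
      linarith
    · rw [hct, hcf] at hdiff
      have c1 : (1:ℝ) ≤ (m (x, true) : ℝ) := by exact_mod_cast hm1 (x, true)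
      have c2 : (1:ℝ) ≤ (m (y, false) : ℝ) := by exact_mod_cast hm1 (y, false)
      linarith
    · rw [hct, hct] at hdiff
      exact hne (hminj (by exact_mod_cast hdiff))
  -- margins
  set P : Finset (V × V) := Finset.univ.filter (fun p => p.1 ≠ p.2 ∧ ¬ G.Adj p.1 p.2) with hP
  set g1 : V × V → ℝ :=
    fun p => toIcoMod Real.two_pi_pos (s p.1 - ℓ p.1) (s p.2 - ℓ p.2) - s p.1 with hg1
  set g2 : V × V → ℝ :=
    fun p => (s p.1 - ℓ p.1) + 2*π
      - toIcoMod Real.two_pi_pos (s p.1 - ℓ p.1) (s p.2 - ℓ p.2) with hg2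
  set F : Finset ℝ :=
    insert 1 (P.image g1 ∪ (P.image g2 ∪ Finset.univ.image (fun v => 2*π - ℓ v))) with hF
  have hFne : F.Nonempty := ⟨1, Finset.mem_insert_self _ _⟩
  have hnomem : ∀ p ∈ P, ¬ AMem (s p.1 - ℓ p.1) (s p.1) (s p.2 - ℓ p.2) := by
    intro p hp
    rw [hP, Finset.mem_filter] at hp
    obtain ⟨-, hne, hna⟩ := hp
    have hnm : ¬ Meets (s p.1 - ℓ p.1) (s p.1) (s p.2 - ℓ p.2) (s p.2) := by
      intro hmeet
      exact hna ((hadj p.1 p.2 hne).2 hmeet)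
    intro hmem
    exact hnm (meets_of_memL (by linarith [(hlen p.1).1])
      (by linarith [(hlen p.2).1]) hmem)
  have hFpos : ∀ x ∈ F, 0 < x := by
    intro x hx
    rw [hF, Finset.mem_insert] at hx
    rcases hx with rfl | hx
    · norm_num
    rw [Finset.mem_union, Finset.mem_union] at hx
    rcases hx with hx | hx | hx
    · obtain ⟨p, hp, rfl⟩ := Finset.mem_image.1 hx
      have hnm := hnomem p hp
      have hgt : s p.1 < toIcoMod Real.two_pi_pos (s p.1 - ℓ p.1) (s p.2 - ℓ p.2) := by
        by_contra hle
        push_neg at hle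
        exact hnm hle
      simp only [hg1]
      linarith
    · obtain ⟨p, hp, rfl⟩ := Finset.mem_image.1 hx
      simp only [hg2]
      linarith [toIcoMod_lt (a := s p.1 - ℓ p.1) (x := s p.2 - ℓ p.2)]
    · obtain ⟨v, _, rfl⟩ := Finset.mem_image.1 hx
      linarith [(hlen v).2]
  set ε₀ : ℝ := F.min' hFne / (2 * M + 1) with hε₀
  have hMpos : (0:ℝ) < 2 * M + 1 := by positivity
  have hε₀pos : 0 < ε₀ := div_pos (hFpos _ (F.min'_mem hFne)) hMpos
  -- bad set of perturbation scales
  set pert : V × Bool → ℝ → ℝ := fun t ε => base t + ε * coefR t with hpert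
  set Bad : Set ℝ :=
    {ε : ℝ | ∃ t t' : V × Bool, t ≠ t' ∧ ∃ k : ℤ, pert t ε = pert t' ε + k * (2*π)} with hBad
  have hBadC : Bad.Countable := by
    have hsub : Bad ⊆ ⋃ q : (V × Bool) × (V × Bool) × ℤ,
        {ε : ℝ | q.1 ≠ q.2.1 ∧ ε * (coefR q.1 - coefR q.2.1)
          = base q.2.1 - base q.1 + q.2.2 * (2*π)} := by
      rintro ε ⟨t, t', hne, k, hk⟩
      rw [Set.mem_iUnion]
      refine ⟨⟨t, t', k⟩, hne, ?_⟩
      simp only [hpert] at hk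
      linarith
    refine Set.Countable.mono hsub (Set.countable_iUnion (fun q => Set.Subsingleton.countable ?_))
    rintro ε₁ ⟨hne, h₁⟩ ε₂ ⟨-, h₂⟩
    have hcne := hcoefne _ _ hne
    have heq2 : ε₁ * (coefR q.1 - coefR q.2.1) = ε₂ * (coefR q.1 - coefR q.2.1) := by
      rw [h₁, h₂]
    exact mul_right_cancel₀ hcne heq2
  -- choose a good ε
  have hIooBad : ¬ (Set.Ioo (0:ℝ) ε₀ ⊆ Bad) := by
    intro hsub
    have hc : (Set.Ioo (0:ℝ) ε₀).Countable := Set.Countable.mono hsub hBadC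
    have hm0 := Set.Countable.measure_zero hc MeasureTheory.volume
    rw [Real.volume_Ioo, ENNReal.ofReal_eq_zero] at hm0
    linarith
  obtain ⟨ε, hεI, hεB⟩ := Set.not_subset.1 hIooBad
  rw [Set.mem_Ioo] at hεI
  obtain ⟨hε0, hεlt⟩ := hεI
  have hsmall : ∀ x ∈ F, ε * M + ε * M < x := by
    intro x hx
    have h1 : ε * (2 * (M:ℝ) + 1) < F.min' hFne := by
      have h0 : ε < F.min' hFne / (2 * (M:ℝ) + 1) := hεlt
      rw [lt_div_iff₀ hMpos] at h0
      exact h0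
    have h2 := F.min'_le x hx
    have h3 : ε * (2 * (M:ℝ) + 1) = ε * M + ε * M + ε := by ring
    linarith
  have hmeps : ∀ t : V × Bool, 0 < ε * m t ∧ ε * m t ≤ ε * M := by
    intro t
    constructor
    · have h1 : (1:ℝ) ≤ m t := by exact_mod_cast hm1 t
      nlinarith
    · apply mul_le_mul_of_nonneg_left _ (le_of_lt hε0)
      exact_mod_cast hmM t
  have hlF : ∀ v, (2*π - ℓ v) ∈ F := by
    intro v
    rw [hF, Finset.mem_insert]
    right
    rw [Finset.mem_union, Finset.mem_union]
    right; right
    exact Finset.mem_image.2 ⟨v, Finset.mem_univ _, rfl⟩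
  -- the enlarged arcs
  set a' : V → ℝ := fun v => s v - ℓ v - ε * m (v, false) with ha'
  set b' : V → ℝ := fun v => s v + ε * m (v, true) with hb'
  have ha'v : ∀ v, a' v = s v - ℓ v - ε * m (v, false) := fun v => rfl
  have hb'v : ∀ v, b' v = s v + ε * m (v, true) := fun v => rfl
  have hlen' : ∀ v, 0 < b' v - a' v ∧ b' v - a' v < 2*π := by
    intro v
    have h1 := (hmeps (v, false)).1
    have h2 := (hmeps (v, true)).1
    have h3 := (hmeps (v, false)).2
    have h4 := (hmeps (v, true)).2
    have h5 := hsmall _ (hlF v)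
    rw [ha'v, hb'v]
    constructor
    · linarith [(hlen v).1]
    · linarith
  have hb'ab : ∀ v, a' v < b' v ∧ b' v < a' v + 2*π := by
    intro v
    have := hlen' v
    constructor <;> linarith [this.1, this.2]
  -- non-adjacent pairs stay non-meeting
  have hkey : ∀ u v, u ≠ v → ¬ G.Adj u v → ¬ AMem (a' u) (b' u) (a' v) := by
    intro u v hne hna hmem
    have hPm : (u, v) ∈ P := by
      rw [hP, Finset.mem_filter]
      exact ⟨Finset.mem_univ _, hne, hna⟩
    have hg1F : g1 (u, v) ∈ F := by
      rw [hF, Finset.mem_insert]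
      right
      rw [Finset.mem_union]
      left
      exact Finset.mem_image.2 ⟨(u, v), hPm, rfl⟩
    have hg2F : g2 (u, v) ∈ F := by
      rw [hF, Finset.mem_insert]
      right
      rw [Finset.mem_union, Finset.mem_union]
      right; left
      exact Finset.mem_image.2 ⟨(u, v), hPm, rfl⟩
    have hs1 := hsmall _ hg1F
    have hs2 := hsmall _ hg2F
    rw [hg1] at hs1
    rw [hg2] at hs2
    simp only [] at hs1 hs2
    have hmem' : AMem (s u - ℓ u - ε * m (u, false)) (s u + ε * m (u, true))
        (s v - ℓ v - ε * m (v, false)) := hmem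
    refine perturb_nomem (by linarith [(hlen u).1]) (hmeps (v, false)).1
      (hmeps (u, false)).1 (hmeps (u, true)).1 ?_ ?_ hmem'
    · linarith [(hmeps (v, false)).2, (hmeps (u, true)).2]
    · linarith [(hmeps (u, false)).2, (hmeps (v, false)).2]
  have hadj' : ∀ u v, u ≠ v → (G.Adj u v ↔ Meets (a' u) (b' u) (a' v) (b' v)) := by
    intro u v hne
    constructor
    · intro hA
      have hold := (hadj u v hne).1 hA
      refine meets_mono hold ?_ ?_ ?_ ?_
      · rw [ha'v]; linarith [(hmeps (u, false)).1]
      · rw [hb'v]; linarith [(hmeps (u, true)).1]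
      · rw [ha'v]; linarith [(hmeps (v, false)).1]
      · rw [hb'v]; linarith [(hmeps (v, true)).1]
    · intro hM'
      by_contra hna
      rw [meets_iff_mem (le_of_lt (hb'ab u).1) (hb'ab u).2
        (le_of_lt (hb'ab v).1) (hb'ab v).2] at hM'
      rcases hM' with h | h
      · exact hkey u v hne hna h
      · exact hkey v u (Ne.symm hne) (fun hA => hna hA.symm) h
  -- normalize into [0, 2π)
  set A : V → ℝ := fun v => toIcoMod Real.two_pi_pos 0 (a' v) with hA
  set B : V → ℝ := fun v => A v + (b' v - a' v) with hB
  have hArange : ∀ v, 0 ≤ A v ∧ A v < 2*π := by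
    intro v
    have hmem := toIcoMod_mem_Ico' Real.two_pi_pos (a' v)
    rw [Set.mem_Ico] at hmem
    exact hmem
  have hshift : ∀ v, ∃ j : ℤ, A v = a' v + j * (2*π) ∧ B v = b' v + j * (2*π) := by
    intro v
    obtain ⟨k, hk⟩ := toIcoMod_equiv (a := (0:ℝ)) (x := a' v)
    have hAv : A v = toIcoMod Real.two_pi_pos 0 (a' v) := rfl
    have hBv : B v = A v + (b' v - a' v) := rfl
    refine ⟨-k, ?_, ?_⟩
    · rw [hAv]
      push_cast
      linarith
    · rw [hBv, hAv]
      push_cast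
      linarith
  refine ⟨A, B, hArange, ?_, ?_, ?_⟩
  · intro v
    have h1 := hlen' v
    have hBv : B v = A v + (b' v - a' v) := rfl
    rw [hBv]
    constructor <;> linarith [h1.1, h1.2]
  · intro u v hne
    rw [hadj' u v hne]
    obtain ⟨ju, hju1, hju2⟩ := hshift u
    obtain ⟨jv, hjv1, hjv2⟩ := hshift v
    rw [hju1, hju2, hjv1, hjv2]
    exact (meets_shift_iff ju jv).symm
  · intro t t' heq
    by_contra hne
    apply hεB
    rw [hBad]
    refine ⟨t, t', hne, ?_⟩
    have hBmod : ∀ v, toIcoMod Real.two_pi_pos 0 (B v) = toIcoMod Real.two_pi_pos 0 (b' v) := by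
      intro v
      obtain ⟨j, _, hj2⟩ := hshift v
      rw [hj2, show b' v + (j:ℝ) * (2*π) = b' v + j • (2*π) by rw [zsmul_eq_mul],
        toIcoMod_add_zsmul]
    have hpertval : ∀ r : V × Bool,
        (if r.2 then toIcoMod Real.two_pi_pos 0 (B r.1) else A r.1)
        = toIcoMod Real.two_pi_pos 0 (pert r ε) := by
      intro r
      rcases r with ⟨z, bz⟩
      cases bz
      · have harg : a' z = pert (z, false) ε := by
          show s z - ℓ z - ε * m (z, false) = base (z, false) + ε * coefR (z, false)
          have hb1 : base (z, false) = s z - ℓ z := rfl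
          have hc1 : coefR (z, false) = -((m (z, false) : ℕ) : ℝ) := rfl
          rw [hb1, hc1]
          ring
        show toIcoMod Real.two_pi_pos 0 (a' z) = toIcoMod Real.two_pi_pos 0 (pert (z, false) ε)
        rw [harg]
      · have harg : b' z = pert (z, true) ε := by
          show s z + ε * m (z, true) = base (z, true) + ε * coefR (z, true)
          have hb1 : base (z, true) = s z := rfl
          have hc1 : coefR (z, true) = ((m (z, true) : ℕ) : ℝ) := rfl
          rw [hb1, hc1]
        show toIcoMod Real.two_pi_pos 0 (B z) = toIcoMod Real.two_pi_pos 0 (pert (z, true) ε)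
        rw [hBmod, harg]
    have heq2 : toIcoMod Real.two_pi_pos 0 (pert t ε) = toIcoMod Real.two_pi_pos 0 (pert t' ε) := by
      rw [← hpertval t, ← hpertval t']
      exact heq
    obtain ⟨k₁, hk₁⟩ := toIcoMod_equiv (a := (0:ℝ)) (x := pert t ε)
    obtain ⟨k₂, hk₂⟩ := toIcoMod_equiv (a := (0:ℝ)) (x := pert t' ε)
    refine ⟨k₁ - k₂, ?_⟩
    rw [heq2] at hk₁
    push_cast
    linarith

end S13E

/-- a circular arc graph on `n` vertices with maximum degree `Δ < ⌊n/4⌋`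
has boxicity at most 2. -/
theorem stmt13 {V : Type*} [Fintype V] (G : SimpleGraph V)
    (hrep : ∃ f : V → ℝ × ℝ, IsCARep G f)
    (hΔ : ∀ v : V, (G.neighborSet v).ncard < Fintype.card V / 4) :
    BoxicityLE G 2 := by

  classical
  obtain ⟨f, hflen, hfadj⟩ := hrep
  have hadj0 : ∀ u v, u ≠ v → (G.Adj u v ↔
      S13.Meets ((f u).1 - (f u).2) ((f u).1) ((f v).1 - (f v).2) ((f v).1)) := by
    intro u v huv
    rw [hfadj u v huv, S13.arcSet_inter_iff]
  obtain ⟨a, b, ha, hlen, hadj, hdist⟩ :=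
    S13E.phase1 G (fun v => (f v).1) (fun v => (f v).2) hflen hadj0
  have hNc : ∀ v, 4 * (G.neighborFinset v).card + 4 ≤ Fintype.card V := by
    intro v
    have h1 := hΔ v
    have h2 : (G.neighborSet v).ncard = (G.neighborFinset v).card := by
      rw [Set.ncard_eq_toFinset_card']
      rfl
    rw [h2] at h1
    have h3 := Nat.div_mul_le_self (Fintype.card V) 4
    omega
  obtain ⟨c, d, hbnds, hadj2⟩ := S13C.phase2 G a b (fun v => G.neighborFinset v)
    (fun v w => SimpleGraph.mem_neighborFinset G v w) hNc
    (fun v => ⟨(ha v).1, (ha v).2⟩) hlen hadj hdist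
  exact S13D.phase3 G c d hbnds hadj2


end
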